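/- arXiv:2407.00083 — 2 statements merged into one kernel-verified Lean document; each statement's English description precedes it below -/
import Mathlib

section
/- Let S be a finite singleton-rich semigroup and s, t ∈ S. The sequence φ(s^φ_i, t^φ_i) is eventually constant: there exists i° such that φ(s^φ_i, t^φ_i) = φ(s^φ_{i°}, t^φ_{i°}) for all i ≥ i°. (Here φ(x,y) = (x*y)⁺ and s^φ, t^φ are the φ-sequences starting at (s,t).) The common eventual value is denoted φ^{(s,t)}. -/
open scoped Classical

/-- φ*(s): the idempotent right identities of `s`. -/
def rIds {S : Type*} [Mul S] (s : S) : Set S := {e | e * e = e ∧ s * e = s}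

/-- φ⁺(s): the idempotent left identities of `s`. -/
def lIds {S : Type*} [Mul S] (s : S) : Set S := {e | e * e = e ∧ e * s = s}

/-- `x` is the (necessarily unique) element of a singleton kernel (minimal ideal) of the
subsemigroup `T`: `{x}` is an ideal of `T`, hence the minimal ideal of `T`. -/
def IsKer {S : Type*} [Semigroup S] (T : Subsemigroup S) (x : S) : Prop :=
  x ∈ T ∧ ∀ a ∈ T, a * x = x ∧ x * a = x

/-- The natural partial order on idempotents: `e ≤ f` iff `ef = fe = e`. -/
def nle {S : Type*} [Mul S] (e f : S) : Prop := e * f = e ∧ f * e = e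

/-- The relation `≪`: `s ≪ t` iff `s = s⁺ t s*`, where `sa s = s*` and `pl s = s⁺`. -/
def ll {S : Type*} [Mul S] (sa pl : S → S) (s t : S) : Prop := s = pl s * t * sa s

/-- φ(x,y) = (x* y)⁺. -/
def phiF {S : Type*} [Mul S] (sa pl : S → S) (x y : S) : S := pl (sa x * y)

/-- ψ(x,y) = (x y⁺)*. -/
def psiF {S : Type*} [Mul S] (sa pl : S → S) (x y : S) : S := sa (x * pl y)

/-- The φ-sequence: `(s^φ₀, t^φ₀) = (s, t)`,
`s^φ_{i+1} = s^φ_i φ(s^φ_i, t^φ_i)`, `t^φ_{i+1} = (s^φ_i)* t^φ_i`. -/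
def phiSeq {S : Type*} [Mul S] (sa pl : S → S) (s t : S) : ℕ → S × S
  | 0 => (s, t)
  | i + 1 =>
      let p := phiSeq sa pl s t i
      (p.1 * phiF sa pl p.1 p.2, sa p.1 * p.2)

/-- The ψ-sequence: `(s^ψ₀, t^ψ₀) = (s, t)`,
`s^ψ_{i+1} = s^ψ_i (t^ψ_i)⁺`, `t^ψ_{i+1} = ψ(s^ψ_i, t^ψ_i) t^ψ_i`. -/
def psiSeq {S : Type*} [Mul S] (sa pl : S → S) (s t : S) : ℕ → S × S
  | 0 => (s, t)
  | i + 1 =>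
      let p := psiSeq sa pl s t i
      (p.1 * pl p.2, psiF sa pl p.1 p.2 * p.2)

section lems
variable {S : Type*} [Semigroup S] (sa pl : S → S)

lemma pl_left_id (hpl : ∀ s : S, IsKer (Subsemigroup.closure (lIds s)) (pl s)) (x : S) : pl x * x = x := by
  have h : ∀ a ∈ Subsemigroup.closure (lIds x), a * x = x := by
    intro a ha
    induction ha using Subsemigroup.closure_induction with
    | mem e he => exact he.2
    | mul a b _ _ ha hb => rw [mul_assoc, hb, ha]
  exact h _ (hpl x).1

lemma pl_idem (hpl : ∀ s : S, IsKer (Subsemigroup.closure (lIds s)) (pl s)) (x : S) : pl x * pl x = pl x := ((hpl x).2 _ (hpl x).1).1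

lemma pl_absorb (hpl : ∀ s : S, IsKer (Subsemigroup.closure (lIds s)) (pl s)) {e x : S} (he : e ∈ lIds x) : e * pl x = pl x ∧ pl x * e = pl x :=
  (hpl x).2 e (Subsemigroup.subset_closure he)

lemma sa_absorb (hsa : ∀ s : S, IsKer (Subsemigroup.closure (rIds s)) (sa s)) {e x : S} (he : e ∈ rIds x) : e * sa x = sa x ∧ sa x * e = sa x :=
  (hsa x).2 e (Subsemigroup.subset_closure he)

lemma nle_trans {e f g : S} (h1 : nle e f) (h2 : nle f g) : nle e g :=
  ⟨by rw [← h1.1, mul_assoc, h2.1], by rw [← h1.2, ← mul_assoc, h2.2]⟩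

lemma nle_antisymm {e f : S} (h1 : nle e f) (h2 : nle f e) : e = f := by
  rw [← h1.2, h2.1]

lemma step_nle (hsa : ∀ s : S, IsKer (Subsemigroup.closure (rIds s)) (sa s))
    (hpl : ∀ s : S, IsKer (Subsemigroup.closure (lIds s)) (pl s)) (s t : S) (i : ℕ) :
    nle (phiF sa pl (phiSeq sa pl s t (i+1)).1 (phiSeq sa pl s t (i+1)).2)
        (phiF sa pl (phiSeq sa pl s t i).1 (phiSeq sa pl s t i).2) := by
  set p := phiSeq sa pl s t i with hp
  set e := phiF sa pl p.1 p.2 with he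
  have hseq : phiSeq sa pl s t (i+1) = (p.1 * e, sa p.1 * p.2) := rfl
  rw [hseq]
  -- e is idempotent
  have hee : e * e = e := pl_idem pl hpl _
  -- e ∈ rIds (p.1 * e)
  have hr : e ∈ rIds (p.1 * e) := ⟨hee, by rw [mul_assoc, hee]⟩
  have hsae : e * sa (p.1 * e) = sa (p.1 * e) := (sa_absorb sa hsa hr).1
  -- e is a left identity of sa p.1 * p.2
  have het : e * (sa p.1 * p.2) = sa p.1 * p.2 := pl_left_id pl hpl _
  -- e ∈ lIds (sa (p.1*e) * (sa p.1 * p.2))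
  have hl : e ∈ lIds (sa (p.1 * e) * (sa p.1 * p.2)) :=
    ⟨hee, by rw [← mul_assoc, hsae]⟩
  exact ⟨(pl_absorb pl hpl hl).2, (pl_absorb pl hpl hl).1⟩

end lems

/-- The sequence `φ(s^φ_i, t^φ_i)` is eventually constant. -/
theorem stmt12 {S : Type*} [Semigroup S] [Fintype S] (sa pl : S → S)
    (hsa : ∀ s : S, IsKer (Subsemigroup.closure (rIds s)) (sa s))
    (hpl : ∀ s : S, IsKer (Subsemigroup.closure (lIds s)) (pl s))
    (s t : S) :
    ∃ N : ℕ, ∀ i ≥ N,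
      phiF sa pl (phiSeq sa pl s t i).1 (phiSeq sa pl s t i).2 =
        phiF sa pl (phiSeq sa pl s t N).1 (phiSeq sa pl s t N).2 := by
  set e : ℕ → S := fun i => phiF sa pl (phiSeq sa pl s t i).1 (phiSeq sa pl s t i).2 with hedef
  have hmono : ∀ i j, i ≤ j → nle (e j) (e i) := by
    intro i j hij
    induction j, hij using Nat.le_induction with
    | base =>
      exact ⟨pl_idem pl hpl _, pl_idem pl hpl _⟩
    | succ n hn ih => exact nle_trans (step_nle sa pl hsa hpl s t n) ih
  -- pigeonhole: the sequence phiSeq is not injective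
  have : ¬ Function.Injective (phiSeq sa pl s t) := by
    intro h
    exact (Finite.of_injective _ h).false
  obtain ⟨a, b, hab, hne⟩ : ∃ a b, phiSeq sa pl s t a = phiSeq sa pl s t b ∧ a ≠ b := by
    by_contra hc
    push_neg at hc
    exact this fun a b h => by by_contra hne; exact hne (hc a b h)
  wlog hlt : a < b generalizing a b
  · exact this b a hab.symm hne.symm (hne.lt_or_gt.resolve_left hlt)
  -- periodicity
  have hper : ∀ k, phiSeq sa pl s t (a + k) = phiSeq sa pl s t (b + k) := by
    intro k
    induction k with
    | zero => simpa using hab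
    | succ n ih =>
      have : ∀ m, phiSeq sa pl s t (m + 1) =
          ((phiSeq sa pl s t m).1 * phiF sa pl (phiSeq sa pl s t m).1 (phiSeq sa pl s t m).2,
            sa (phiSeq sa pl s t m).1 * (phiSeq sa pl s t m).2) := fun m => rfl
      rw [show a + (n+1) = (a+n) + 1 from rfl, show b + (n+1) = (b+n) + 1 from rfl,
        this, this, ih]
  refine ⟨a, fun i hi => ?_⟩
  -- find k with a + k*(b-a) ≥ i; take iterate of period
  have hd : 0 < b - a := Nat.sub_pos_of_lt hlt
  have hiter : ∀ k, phiSeq sa pl s t (a + k * (b - a)) = phiSeq sa pl s t a := by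
    intro k
    induction k with
    | zero => simp
    | succ n ih =>
      have : a + (n+1) * (b - a) = b + n * (b - a) := by
        rw [Nat.succ_mul]; omega
      rw [this, ← hper, ih]
  have hk : i ≤ a + i * (b - a) := by
    calc i ≤ i * (b - a) := Nat.le_mul_of_pos_right i hd
    _ ≤ a + i * (b - a) := Nat.le_add_left _ _
  have h1 : nle (e (a + i * (b - a))) (e i) := hmono i _ hk
  have h2 : nle (e i) (e a) := hmono a i hi
  have h3 : e (a + i * (b - a)) = e a := by
    simp only [hedef, hiter i]
  rw [h3] at h1
  exact nle_antisymm h2 h1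
end

section
/- Let S be a finite singleton-rich semigroup and s, t ∈ S such that sᵢ* tᵢ⁺ = tᵢ⁺ sᵢ* for every i ≥ 0 in the ε-sequence (s₀ = s, t₀ = t, s_{i+1} = sᵢ tᵢ⁺, t_{i+1} = sᵢ* tᵢ). Then φ^{(s,t)} = ψ^{(s,t)}, and s_{2i} = s^φ_i and t_{2i} = t^ψ_i for all i ≥ 0. In particular, if S ∈ ECom (idempotents commute), this holds for all pairs (s,t). -/
open scoped Classical

/-- `e` is the stable (eventual) value `φ^{(s,t)}` of the sequence `φ(s^φ_i, t^φ_i)`. -/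
def IsPhiLim {S : Type*} [Mul S] (sa pl : S → S) (s t e : S) : Prop :=
  ∃ N : ℕ, ∀ i ≥ N, phiF sa pl (phiSeq sa pl s t i).1 (phiSeq sa pl s t i).2 = e

/-- `e` is the stable (eventual) value `ψ^{(s,t)}` of the sequence `ψ(s^ψ_i, t^ψ_i)`. -/
def IsPsiLim {S : Type*} [Mul S] (sa pl : S → S) (s t e : S) : Prop :=
  ∃ N : ℕ, ∀ i ≥ N, psiF sa pl (psiSeq sa pl s t i).1 (psiSeq sa pl s t i).2 = e


lemma rIds_closure_mul {S : Type*} [Semigroup S] (s : S) {a : S}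
    (ha : a ∈ Subsemigroup.closure (rIds s)) : s * a = s := by
  induction ha using Subsemigroup.closure_induction with
  | mem x hx => exact hx.2
  | mul x y hx hy ihx ihy => rw [← mul_assoc, ihx, ihy]

lemma lIds_closure_mul {S : Type*} [Semigroup S] (s : S) {a : S}
    (ha : a ∈ Subsemigroup.closure (lIds s)) : a * s = s := by
  induction ha using Subsemigroup.closure_induction with
  | mem x hx => exact hx.2
  | mul x y hx hy ihx ihy => rw [mul_assoc, ihy, ihx]

/-- A decreasing (in the natural order on idempotents) sequence in a finite
semigroup is eventually constant. -/
lemma ev_const {S : Type*} [Semigroup S] [Fintype S] (u : ℕ → S)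
    (hid : ∀ i, u i * u i = u i)
    (hstep : ∀ i, u (i+1) * u i = u (i+1) ∧ u i * u (i+1) = u (i+1)) :
    ∃ N v, ∀ i ≥ N, u i = v := by
  have hdec : ∀ i j, i ≤ j → u j * u i = u j ∧ u i * u j = u j := by
    intro i j hij
    induction j, hij using Nat.le_induction with
    | base => exact ⟨hid i, hid i⟩
    | succ j hij ih =>
      obtain ⟨h1, h2⟩ := ih
      obtain ⟨h3, h4⟩ := hstep j
      constructor
      · calc u (j+1) * u i = u (j+1) * u j * u i := by rw [h3]
          _ = u (j+1) * u j := by rw [mul_assoc, h1]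
          _ = u (j+1) := h3
      · calc u i * u (j+1) = u i * (u j * u (j+1)) := by rw [h4]
          _ = u j * u (j+1) := by rw [← mul_assoc, h2]
          _ = u (j+1) := h4
  obtain ⟨v, hv0⟩ := Finite.exists_infinite_fiber u
  have hv : (u ⁻¹' {v}).Infinite := Set.infinite_coe_iff.mp hv0
  obtain ⟨N, hN⟩ := hv.nonempty
  refine ⟨N, v, fun i hi => ?_⟩
  obtain ⟨j, hj, hij⟩ := hv.exists_gt i
  have hvN : u N = v := hN
  have hvj : u j = v := hj
  have h1 := (hdec N i hi).2
  have h2 := (hdec i j hij.le).1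
  rw [hvN] at h1
  rw [hvj] at h2
  rw [← h1, h2]

/-- If `sᵢ* tᵢ⁺ = tᵢ⁺ sᵢ*` for all `i ≥ 0` in the ε-sequence, then `φ^{(s,t)} = ψ^{(s,t)}`,
and `s_{2i} = s^φ_i`, `t_{2i} = t^ψ_i` for all `i`. (In particular this applies to all pairs
when idempotents of `S` commute.) -/
theorem stmt15 {S : Type*} [Semigroup S] [Fintype S] (sa pl : S → S)
    (hsa : ∀ s : S, IsKer (Subsemigroup.closure (rIds s)) (sa s))
    (hpl : ∀ s : S, IsKer (Subsemigroup.closure (lIds s)) (pl s))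
    (s t : S) (sq tq : ℕ → S) (hs0 : sq 0 = s) (ht0 : tq 0 = t)
    (hcomm : ∀ i : ℕ, sa (sq i) * pl (tq i) = pl (tq i) * sa (sq i))
    (hrec : ∀ i : ℕ, sq (i + 1) = sq i * pl (tq i) ∧ tq (i + 1) = sa (sq i) * tq i)
    (phiL psiL : S)
    (hphi : IsPhiLim sa pl s t phiL) (hpsi : IsPsiLim sa pl s t psiL) :
    phiL = psiL ∧
      ∀ i : ℕ, sq (2 * i) = (phiSeq sa pl s t i).1 ∧ tq (2 * i) = (psiSeq sa pl s t i).2 := by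

  have saIdem : ∀ x : S, sa x * sa x = sa x := fun x => ((hsa x).2 _ (hsa x).1).1
  have saRId : ∀ x : S, x * sa x = x := fun x => rIds_closure_mul x (hsa x).1
  have saAbs : ∀ x a : S, a ∈ rIds x → a * sa x = sa x ∧ sa x * a = sa x :=
    fun x a ha => (hsa x).2 a (Subsemigroup.subset_closure ha)
  have plIdem : ∀ x : S, pl x * pl x = pl x := fun x => ((hpl x).2 _ (hpl x).1).1
  have plLId : ∀ x : S, pl x * x = x := fun x => lIds_closure_mul x (hpl x).1
  have plAbs : ∀ x a : S, a ∈ lIds x → a * pl x = pl x ∧ pl x * a = pl x :=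
    fun x a ha => (hpl x).2 a (Subsemigroup.subset_closure ha)
  have memEl : ∀ i, pl (tq i) ∈ lIds (tq (i+1)) := by
    intro i
    refine ⟨plIdem _, ?_⟩
    rw [(hrec i).2, ← mul_assoc, ← hcomm i, mul_assoc, plLId]
  have memEr : ∀ i, pl (tq i) ∈ rIds (sq (i+1)) := by
    intro i
    refine ⟨plIdem _, ?_⟩
    rw [(hrec i).1, mul_assoc, plIdem]
  have memFl : ∀ i, sa (sq i) ∈ lIds (tq (i+1)) := by
    intro i
    refine ⟨saIdem _, ?_⟩
    rw [(hrec i).2, ← mul_assoc, saIdem]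
  have memFr : ∀ i, sa (sq i) ∈ rIds (sq (i+1)) := by
    intro i
    refine ⟨saIdem _, ?_⟩
    rw [(hrec i).1, mul_assoc, ← hcomm i, ← mul_assoc, saRId]
  have hEE1 : ∀ i, pl (tq (i+1)) * pl (tq i) = pl (tq (i+1)) := fun i => (plAbs _ _ (memEl i)).2
  have hEE2 : ∀ i, pl (tq i) * pl (tq (i+1)) = pl (tq (i+1)) := fun i => (plAbs _ _ (memEl i)).1
  have hFF1 : ∀ i, sa (sq (i+1)) * sa (sq i) = sa (sq (i+1)) := fun i => (saAbs _ _ (memFr i)).2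
  have hFF2 : ∀ i, sa (sq i) * sa (sq (i+1)) = sa (sq (i+1)) := fun i => (saAbs _ _ (memFr i)).1
  have hEF2 : ∀ i, sa (sq i) * pl (tq (i+1)) = pl (tq (i+1)) := fun i => (plAbs _ _ (memFl i)).1
  have hFE1 : ∀ i, sa (sq (i+1)) * pl (tq i) = sa (sq (i+1)) := fun i => (saAbs _ _ (memEr i)).2
  -- the φ-sequence induction
  have hPhi : ∀ i, (phiSeq sa pl s t i).1 = sq (2*i) ∧
      sa (sq (2*i)) * (phiSeq sa pl s t i).2 = tq (2*i+1) := by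
    intro i
    induction i with
    | zero =>
      constructor
      · exact hs0.symm
      · show sa (sq 0) * t = tq (0+1)
        rw [(hrec 0).2, ht0]
    | succ i ih =>
      obtain ⟨ih1, ih2⟩ := ih
      have h2' : (phiSeq sa pl s t (i+1)).2 = tq (2*i+1) := by
        show sa (phiSeq sa pl s t i).1 * (phiSeq sa pl s t i).2 = tq (2*i+1)
        rw [ih1]; exact ih2
      have h1' : (phiSeq sa pl s t (i+1)).1 = sq (2*(i+1)) := by
        show (phiSeq sa pl s t i).1 *
            pl (sa (phiSeq sa pl s t i).1 * (phiSeq sa pl s t i).2) = sq (2*(i+1))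
        rw [ih1, ih2, show 2*(i+1) = (2*i+1)+1 from by ring, (hrec (2*i+1)).1,
          (hrec (2*i)).1, mul_assoc, hEE2 (2*i)]
      refine ⟨h1', ?_⟩
      rw [h2', show 2*(i+1) = (2*i+1)+1 from by ring, (hrec ((2*i+1)+1)).2,
        (hrec (2*i+1)).2, ← mul_assoc, hFF1 (2*i+1)]
  -- the ψ-sequence induction
  have hPsi : ∀ i, (psiSeq sa pl s t i).2 = tq (2*i) ∧
      (psiSeq sa pl s t i).1 * pl (tq (2*i)) = sq (2*i+1) := by
    intro i
    induction i with
    | zero =>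
      constructor
      · exact ht0.symm
      · show s * pl (tq 0) = sq (0+1)
        rw [(hrec 0).1, hs0]
    | succ i ih =>
      obtain ⟨ih1, ih2⟩ := ih
      have h1' : (psiSeq sa pl s t (i+1)).1 = sq (2*i+1) := by
        show (psiSeq sa pl s t i).1 * pl (psiSeq sa pl s t i).2 = sq (2*i+1)
        rw [ih1]; exact ih2
      have h2' : (psiSeq sa pl s t (i+1)).2 = tq (2*(i+1)) := by
        show sa ((psiSeq sa pl s t i).1 * pl (psiSeq sa pl s t i).2) *
            (psiSeq sa pl s t i).2 = tq (2*(i+1))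
        rw [ih1, ih2, show 2*(i+1) = (2*i+1)+1 from by ring, (hrec (2*i+1)).2,
          (hrec (2*i)).2, ← mul_assoc, hFF1 (2*i)]
      refine ⟨h2', ?_⟩
      rw [h1', show 2*(i+1) = (2*i+1)+1 from by ring, (hrec ((2*i+1)+1)).1,
        (hrec (2*i+1)).1, mul_assoc, hEE2 (2*i+1)]
  -- eventual constancy of the idempotent sequences
  obtain ⟨NE, vE, hvE⟩ := ev_const (fun i => pl (tq i)) (fun i => plIdem _)
    (fun i => ⟨hEE1 i, hEE2 i⟩)
  obtain ⟨NF, vF, hvF⟩ := ev_const (fun i => sa (sq i)) (fun i => saIdem _)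
    (fun i => ⟨hFF1 i, hFF2 i⟩)
  have hvE' : ∀ i ≥ NE, pl (tq i) = vE := hvE
  have hvF' : ∀ i ≥ NF, sa (sq i) = vF := hvF
  have key : vE = vF := by
    set M := max NE NF with hM
    have h1 := hEF2 M
    have h2 := hFE1 M
    rw [hvE' (M+1) (by omega), hvF' M (by omega)] at h1
    rw [hvF' (M+1) (by omega), hvE' M (by omega)] at h2
    rw [← h1]; exact h2
  obtain ⟨Nphi, hNphi⟩ := hphi
  obtain ⟨Npsi, hNpsi⟩ := hpsi
  constructor
  · set n := Nphi + Npsi + NE + NF with hn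
    have hA := hNphi n (by omega)
    have hB := hNpsi n (by omega)
    simp only [phiF] at hA
    simp only [psiF] at hB
    rw [(hPhi n).1, (hPhi n).2] at hA
    rw [(hPsi n).1, (hPsi n).2] at hB
    calc phiL = pl (tq (2*n+1)) := hA.symm
      _ = vE := hvE' _ (by omega)
      _ = vF := key
      _ = sa (sq (2*n+1)) := (hvF' _ (by omega)).symm
      _ = psiL := hB
  · exact fun i => ⟨(hPhi i).1.symm, (hPsi i).1.symm⟩
end
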